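/- Let C ⊆ ℕ^p be an integer cone, ⪯ an admissible total order on ℕ^p, f ∈ C \ {0}, and let T be a C-semigroup with Fb(T) = f. For a C-semigroup S with Fb(S) = f, S ∩ B(f) = T ∩ B(f) and S ≠ T, say S is a child of T if T = S ∪ {λ(S)}. Then S is a child of T if and only if S = T \ {x} for some minimal generator x of T with x ∈ C \ B(f) and λ(T) ≺ x ≺ f. -/
import Mathlib


open Set BigOperators

/-- `C` is an integer cone: the intersection with `ℕ^p` of the set of nonnegative
real linear combinations of a finite set `A ⊆ ℕ^p`. -/
def IsIntegerCone (p : ℕ) (C : Set (Fin p → ℕ)) : Prop :=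
  ∃ A : Finset (Fin p → ℕ),
    C = {x : Fin p → ℕ | ∃ l : (Fin p → ℕ) → ℝ,
      (∀ a, 0 ≤ l a) ∧ ∀ i, (x i : ℝ) = ∑ a ∈ A, l a * (a i : ℝ)}

/-- An admissible total order on `ℕ^p`: total, compatible with addition,
with `0` minimum, and with finite down-sets. -/
structure AdmissibleOrder (p : ℕ) where
  le : (Fin p → ℕ) → (Fin p → ℕ) → Prop
  le_refl : ∀ x, le x x
  le_antisymm : ∀ x y, le x y → le y x → x = y
  le_trans : ∀ x y z, le x y → le y z → le x z
  le_total : ∀ x y, le x y ∨ le y x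
  add_right : ∀ x y z, le x y → le (x + z) (y + z)
  zero_le : ∀ x, le 0 x
  finite_le : ∀ f, {x : Fin p → ℕ | le x f}.Finite

/-- Strict version of an admissible order. -/
def AdmissibleOrder.lt {p : ℕ} (O : AdmissibleOrder p) (x y : Fin p → ℕ) : Prop :=
  O.le x y ∧ x ≠ y

/-- `S` is a `C`-semigroup: a submonoid of `ℕ^p` contained in `C` with finite complement in `C`. -/
def IsCSemigroup {p : ℕ} (C S : Set (Fin p → ℕ)) : Prop :=
  S ⊆ C ∧ 0 ∈ S ∧ (∀ x ∈ S, ∀ y ∈ S, x + y ∈ S) ∧ (C \ S).Finite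

/-- `f` is the Frobenius element of `S`: the `⪯`-maximum of `C \ S`. -/
def IsFrob {p : ℕ} (O : AdmissibleOrder p) (C S : Set (Fin p → ℕ)) (f : Fin p → ℕ) : Prop :=
  f ∈ C \ S ∧ ∀ x ∈ C \ S, O.le x f

/-- `B(f) = {x ∈ C : f - x ∈ C}`. -/
def BSet {p : ℕ} (C : Set (Fin p → ℕ)) (f : Fin p → ℕ) : Set (Fin p → ℕ) :=
  {x | x ∈ C ∧ ∃ y ∈ C, x + y = f}

/-- `N(f) = #{x ∈ C \ {0} : x ⪯ f}`. -/
noncomputable def NNum {p : ℕ} (O : AdmissibleOrder p) (C : Set (Fin p → ℕ)) (f : Fin p → ℕ) : ℕ :=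
  {x | x ∈ C ∧ x ≠ 0 ∧ O.le x f}.ncard

/-- The genus of `S`: the number of gaps `#(C \ S)`. -/
noncomputable def genusOf {p : ℕ} (C S : Set (Fin p → ℕ)) : ℕ := (C \ S).ncard

/-- The number of small elements `n(S) = #{s ∈ S : s ≺ Fb(S)}`; an element is smaller than
the Frobenius element iff it is strictly smaller than some gap. -/
noncomputable def smallCount {p : ℕ} (O : AdmissibleOrder p) (C S : Set (Fin p → ℕ)) : ℕ :=
  {s | s ∈ S ∧ ∃ h ∈ C \ S, O.lt s h}.ncard

/-- The minimal generating set of `S`. -/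
def msg {p : ℕ} (S : Set (Fin p → ℕ)) : Set (Fin p → ℕ) :=
  (S \ {0}) \ {x | ∃ a ∈ S \ {0}, ∃ b ∈ S \ {0}, a + b = x}

/-- `S` is a `B`-semigroup with respect to `f`. -/
def IsBSemigroup {p : ℕ} (O : AdmissibleOrder p) (C S : Set (Fin p → ℕ)) (f : Fin p → ℕ) : Prop :=
  IsCSemigroup C S ∧ IsFrob O C S f ∧ C \ BSet C f ⊆ S

/-- `a = α(S)`, the `⪯`-minimum of `(S \ {0}) ∩ B(f)`, with the convention `α(S) = f`
when `S ∩ B(f) = {0}`. -/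
def IsAlpha {p : ℕ} (O : AdmissibleOrder p) (C S : Set (Fin p → ℕ)) (f a : Fin p → ℕ) : Prop :=
  (a ∈ S ∧ a ≠ 0 ∧ a ∈ BSet C f ∧ ∀ x ∈ S, x ≠ 0 → x ∈ BSet C f → O.le a x)
  ∨ ((∀ x ∈ S ∩ BSet C f, x = 0) ∧ a = f)

/-- `x` is a special gap of `T`. -/
def SpecialGap {p : ℕ} (C T : Set (Fin p → ℕ)) (x : Fin p → ℕ) : Prop :=
  x ∈ C \ T ∧ x + x ∈ T ∧ ∀ t ∈ T, t ≠ 0 → x + t ∈ T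

/-- `l = λ(S)`, the `⪯`-largest gap of `S` lying outside `B(f)` (no convention case). -/
def IsLambdaGap {p : ℕ} (O : AdmissibleOrder p) (C S : Set (Fin p → ℕ)) (f l : Fin p → ℕ) : Prop :=
  l ∈ C \ S ∧ l ∉ BSet C f ∧ ∀ x ∈ C \ S, x ∉ BSet C f → O.le x l

/-- `l = λ(S)`, with the convention `λ(S) = 0` when `S` has no gap outside `B(f)`. -/
def IsLambda {p : ℕ} (O : AdmissibleOrder p) (C S : Set (Fin p → ℕ)) (f l : Fin p → ℕ) : Prop :=
  IsLambdaGap O C S f l ∨ ((∀ x ∈ C \ S, x ∈ BSet C f) ∧ l = 0)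

/-- `x ≤_C y` iff `y - x ∈ C`. -/
def leC {p : ℕ} (C : Set (Fin p → ℕ)) (x y : Fin p → ℕ) : Prop := ∃ d ∈ C, x + d = y

/-- The ordinary `C`-semigroup `S_c = {0} ∪ {x ∈ C : c ⪯ x}`. -/
def ordinarySemigroup {p : ℕ} (O : AdmissibleOrder p) (C : Set (Fin p → ℕ))
    (c : Fin p → ℕ) : Set (Fin p → ℕ) :=
  insert 0 {x | x ∈ C ∧ O.le c x}

/-- `S` is an arf semigroup in `C`. -/
def ArfSemigroup {p : ℕ} (C S : Set (Fin p → ℕ)) : Prop :=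
  ∀ x ∈ S, ∀ y ∈ S, ∀ z ∈ S, leC C z y → leC C y x →
    ∀ w : Fin p → ℕ, w + z = x + y → w ∈ S

/-- `S` is a saturated semigroup in `C`: whenever `s, s₁, …, s_r ∈ S` with `s_i ≤_C s`,
and `z : Fin r → ℤ` with `z₁s₁ + ⋯ + z_rs_r ∈ C` (as an element `t` of `ℕ^p`),
then `s + z₁s₁ + ⋯ + z_rs_r = s + t ∈ S`. -/
def SaturatedSemigroup {p : ℕ} (C S : Set (Fin p → ℕ)) : Prop :=
  ∀ (r : ℕ) (s : Fin p → ℕ) (si : Fin r → (Fin p → ℕ)) (z : Fin r → ℤ),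
    s ∈ S → (∀ i, si i ∈ S) → (∀ i, leC C (si i) s) →
    ∀ t ∈ C, (∀ j, (t j : ℤ) = ∑ i, z i * (si i j : ℤ)) → s + t ∈ S

lemma exists_omax_finset {p : ℕ} (O : AdmissibleOrder p) (t : Finset (Fin p → ℕ))
    (hne : t.Nonempty) : ∃ m ∈ t, ∀ x ∈ t, O.le x m := by
  classical
  induction t using Finset.induction_on with
  | empty => exact absurd hne (by simp)
  | @insert a s ha ih =>
    rcases s.eq_empty_or_nonempty with rfl | hs'
    · exact ⟨a, by simp, by simpa using O.le_refl a⟩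
    · obtain ⟨m, hm, hmax⟩ := ih hs'
      rcases O.le_total a m with h | h
      · refine ⟨m, Finset.mem_insert_of_mem hm, ?_⟩
        intro x hx
        rcases Finset.mem_insert.mp hx with rfl | hx'
        · exact h
        · exact hmax x hx'
      · refine ⟨a, Finset.mem_insert_self a s, ?_⟩
        intro x hx
        rcases Finset.mem_insert.mp hx with rfl | hx'
        · exact O.le_refl _
        · exact O.le_trans x m a (hmax x hx') h

lemma exists_omax {p : ℕ} (O : AdmissibleOrder p) {F : Set (Fin p → ℕ)}
    (hF : F.Finite) (hne : F.Nonempty) : ∃ m ∈ F, ∀ x ∈ F, O.le x m := by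
  classical
  obtain ⟨m, hm, hmax⟩ := exists_omax_finset O hF.toFinset (by simpa using hne)
  exact ⟨m, hF.mem_toFinset.mp hm, fun x hx => hmax x (hF.mem_toFinset.mpr hx)⟩

/-- Children characterization: S is a child of T (i.e. T = S ∪ {λ(S)}) iff S = T \ {x} for
some minimal generator x of T with x ∈ C \ B(f) and λ(T) ≺ x ≺ f. -/
theorem statement10 (p : ℕ) (hp : 0 < p) (C : Set (Fin p → ℕ)) (hC : IsIntegerCone p C)
    (O : AdmissibleOrder p) (f : Fin p → ℕ) (hfC : f ∈ C) (hf0 : f ≠ 0)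
    (T : Set (Fin p → ℕ)) (hT : IsCSemigroup C T) (hTf : IsFrob O C T f)
    (S : Set (Fin p → ℕ)) (hS : IsCSemigroup C S) (hSf : IsFrob O C S f)
    (hBeq : S ∩ BSet C f = T ∩ BSet C f) (hne : S ≠ T) :
    (∃ l, IsLambdaGap O C S f l ∧ T = insert l S) ↔
      (∃ x ∈ msg T, x ∈ C ∧ x ∉ BSet C f ∧
        (∃ l, IsLambda O C T f l ∧ O.lt l x) ∧ O.lt x f ∧ S = T \ {x}) := by
  have h0S : (0 : Fin p → ℕ) ∈ S := hS.2.1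
  have hfB : f ∈ BSet C f := ⟨hfC, 0, hS.1 h0S, by simp⟩
  constructor
  · rintro ⟨l, ⟨⟨hlC, hlS⟩, hlB, hlmax⟩, hTeq⟩
    have hlT : l ∈ T := by rw [hTeq]; exact Set.mem_insert l S
    have hl0 : l ≠ 0 := fun h => hlS (h ▸ h0S)
    have hST : S ⊆ T := by rw [hTeq]; exact Set.subset_insert l S
    have hlf : O.lt l f := ⟨hSf.2 l ⟨hlC, hlS⟩, fun h => hlB (h ▸ hfB)⟩
    refine ⟨l, ?_, hlC, hlB, ?_, hlf, ?_⟩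
    · -- l ∈ msg T
      refine ⟨⟨hlT, hl0⟩, ?_⟩
      rintro ⟨a, ⟨haT, ha0⟩, b, ⟨hbT, hb0⟩, hab⟩
      simp only [Set.mem_singleton_iff] at ha0 hb0
      have haS : a ∈ S := by
        rw [hTeq] at haT
        rcases haT with rfl | h
        · exfalso; apply hb0; funext i
          have := congrFun hab i; simp at this ⊢; omega
        · exact h
      have hbS : b ∈ S := by
        rw [hTeq] at hbT
        rcases hbT with rfl | h
        · exfalso; apply ha0; funext i
          have := congrFun hab i; simp at this ⊢; omega
        · exact h
      exact hlS (hab ▸ hS.2.2.1 a haS b hbS)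
    · -- λ(T) exists and λ(T) ≺ l
      set G : Set (Fin p → ℕ) := {g | g ∈ C \ T ∧ g ∉ BSet C f} with hG
      rcases G.eq_empty_or_nonempty with hGe | hGne
      · refine ⟨0, Or.inr ⟨?_, rfl⟩, O.zero_le l, fun h => hlS (h ▸ h0S)⟩
        intro x hx
        by_contra hxB
        exact Set.eq_empty_iff_forall_notMem.mp hGe x ⟨hx, hxB⟩
      · obtain ⟨m, hm, hmax⟩ := exists_omax O
          (hT.2.2.2.subset (fun g hg => hg.1)) hGne
        refine ⟨m, Or.inl ⟨hm.1, hm.2, fun x hx hxB => hmax x ⟨hx, hxB⟩⟩, ?_, ?_⟩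
        · exact hlmax m ⟨hm.1.1, fun h => hm.1.2 (hST h)⟩ hm.2
        · exact fun h => hm.1.2 (h ▸ hlT)
    · -- S = T \ {l}
      rw [hTeq]
      ext y
      simp only [Set.mem_diff, Set.mem_insert_iff, Set.mem_singleton_iff]
      constructor
      · intro hy
        exact ⟨Or.inr hy, fun h => hlS (h ▸ hy)⟩
      · rintro ⟨rfl | hy, hne'⟩
        · exact absurd rfl hne'
        · exact hy
  · rintro ⟨x, ⟨⟨hxT, hx0⟩, _⟩, hxC, hxB, ⟨l, hl, hlx⟩, hxf, hSeq⟩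
    have hxS : x ∉ S := by rw [hSeq]; simp
    refine ⟨x, ⟨⟨hxC, hxS⟩, hxB, ?_⟩, ?_⟩
    · intro g hg hgB
      by_cases hgx : g = x
      · exact hgx ▸ O.le_refl x
      · have hgT : g ∉ T := by
          intro h
          exact hg.2 (hSeq ▸ ⟨h, hgx⟩)
        rcases hl with ⟨_, _, hmax⟩ | ⟨hall, rfl⟩
        · exact O.le_trans g l x (hmax g ⟨hg.1, hgT⟩ hgB) hlx.1
        · exact absurd (hall g ⟨hg.1, hgT⟩) hgB
    · rw [hSeq, Set.insert_diff_singleton, Set.insert_eq_self.mpr hxT]
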